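/- Let X be a normed linear space, let (Ω, μ) and (Ω', μ') be probability spaces, and let f : Ω → X and f' : Ω' → X be functions. Let 0 < r < 1 and 0 < R < ∞, and let E ⊆ Ω × Ω' be a measurable set with (μ × μ')(E) ≥ r such that ‖f(x) − f'(x')‖ ≤ R for all (x,x') ∈ E. Then there exist a ∈ X and measurable sets G ⊆ Ω and G' ⊆ Ω' with μ(G) ≥ r/4 and μ'(G') ≥ r/4, such that ‖f(x) − a‖ ≤ (3/2) R for all x ∈ G and ‖f'(x') − a‖ ≤ (3/2) R for all x' ∈ G'. -/

import Mathlib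

open MeasureTheory

/-- Lemma "frust": if `‖f(x) − f'(x')‖ ≤ R` on a subset `E` of
`Ω × Ω'` of product measure `≥ r`, then there are a point `a ∈ X` and sets `G ⊆ Ω`,
`G' ⊆ Ω'` of measures `≥ r/4` on which `f`, resp. `f'`, is within `(3/2)R` of `a`. -/
theorem stmt_7 {X : Type*} [NormedAddCommGroup X] [NormedSpace ℝ X]
    {Ω Ω' : Type*} [MeasurableSpace Ω] [MeasurableSpace Ω']
    (μ : Measure Ω) (μ' : Measure Ω') [IsProbabilityMeasure μ] [IsProbabilityMeasure μ']
    (f : Ω → X) (f' : Ω' → X) (r R : ℝ) (hr0 : 0 < r) (hr1 : r < 1) (hR : 0 < R)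
    (E : Set (Ω × Ω')) (hE : MeasurableSet E)
    (hEr : ENNReal.ofReal r ≤ μ.prod μ' E)
    (hfE : ∀ p ∈ E, ‖f p.1 - f' p.2‖ ≤ R) :
    ∃ a : X, ∃ G : Set Ω, ∃ G' : Set Ω',
      MeasurableSet G ∧ MeasurableSet G' ∧
      ENNReal.ofReal (r / 4) ≤ μ G ∧ ENNReal.ofReal (r / 4) ≤ μ' G' ∧
      (∀ x ∈ G, ‖f x - a‖ ≤ (3 / 2) * R) ∧
      (∀ x' ∈ G', ‖f' x' - a‖ ≤ (3 / 2) * R) := by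
  -- the set of `x'` whose slice of `E` has measure ≥ r/2
  set B : Set Ω' := {x' | ENNReal.ofReal (r / 2) ≤ μ ((fun x => (x, x')) ⁻¹' E)} with hBdef
  have hmB : Measurable fun x' => μ ((fun x => (x, x')) ⁻¹' E) :=
    measurable_measure_prodMk_right hE
  have hB : MeasurableSet B := measurableSet_le measurable_const hmB
  set F : Set (Ω × Ω') := E ∩ (Set.univ ×ˢ B) with hFdef
  have hF : MeasurableSet F := hE.inter (MeasurableSet.univ.prod hB)
  -- the part of `E` outside `univ ×ˢ B` has measure ≤ r/2
  have hdiff : μ.prod μ' (E \ Set.univ ×ˢ B) ≤ ENNReal.ofReal (r / 2) := by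
    rw [Measure.prod_apply_symm (hE.diff (MeasurableSet.univ.prod hB))]
    calc ∫⁻ x', μ ((fun x => (x, x')) ⁻¹' (E \ Set.univ ×ˢ B)) ∂μ'
        ≤ ∫⁻ _x', ENNReal.ofReal (r / 2) ∂μ' := by
          refine lintegral_mono fun x' => ?_
          by_cases hx' : x' ∈ B
          · have : (fun x => (x, x')) ⁻¹' (E \ Set.univ ×ˢ B) = ∅ := by
              ext x; simp [hx']
            simp [this]
          · have h1 : (fun x => (x, x')) ⁻¹' (E \ Set.univ ×ˢ B) ⊆
                (fun x => (x, x')) ⁻¹' E := fun x hx => hx.1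
            refine le_trans (measure_mono h1) ?_
            exact le_of_not_ge hx'
      _ = ENNReal.ofReal (r / 2) := by simp
  have hFr : ENNReal.ofReal (r / 2) ≤ μ.prod μ' F := by
    have hsplit : μ.prod μ' E ≤ μ.prod μ' F + μ.prod μ' (E \ Set.univ ×ˢ B) :=
      measure_le_inter_add_diff _ _ _
    have h2 : ENNReal.ofReal (r / 2) + ENNReal.ofReal (r / 2) ≤
        μ.prod μ' F + ENNReal.ofReal (r / 2) := by
      rw [← ENNReal.ofReal_add (by linarith) (by linarith)]
      have : r / 2 + r / 2 = r := by ring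
      rw [this]
      exact le_trans hEr (le_trans hsplit (add_le_add_right hdiff _))
    exact (ENNReal.add_le_add_iff_right ENNReal.ofReal_ne_top).mp h2
  -- the set of `x` whose slice of `F` has measure ≥ r/4
  set A : Set Ω := {x | ENNReal.ofReal (r / 4) ≤ μ' (Prod.mk x ⁻¹' F)} with hAdef
  have hmA : Measurable fun x => μ' (Prod.mk x ⁻¹' F) :=
    measurable_measure_prodMk_left hF
  have hA : MeasurableSet A := measurableSet_le measurable_const hmA
  have hAr : ENNReal.ofReal (r / 4) ≤ μ A := by
    have hint : μ.prod μ' F = ∫⁻ x, μ' (Prod.mk x ⁻¹' F) ∂μ := Measure.prod_apply hF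
    have hb1 : ∫⁻ x in A, μ' (Prod.mk x ⁻¹' F) ∂μ ≤ μ A := by
      have h := setLIntegral_mono (μ := μ) (s := A) measurable_const
        (f := fun x => μ' (Prod.mk x ⁻¹' F)) (g := fun _ => 1)
        (fun x _ => prob_le_one)
      simpa using h
    have hb2 : ∫⁻ x in Aᶜ, μ' (Prod.mk x ⁻¹' F) ∂μ ≤ ENNReal.ofReal (r / 4) := by
      have h := setLIntegral_mono (μ := μ) (s := Aᶜ) measurable_const
        (f := fun x => μ' (Prod.mk x ⁻¹' F)) (g := fun _ => ENNReal.ofReal (r / 4))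
        (fun x hx => le_of_not_ge hx)
      rw [setLIntegral_const] at h
      refine h.trans ?_
      calc ENNReal.ofReal (r / 4) * μ Aᶜ ≤ ENNReal.ofReal (r / 4) * 1 := by
            gcongr; exact prob_le_one
        _ = ENNReal.ofReal (r / 4) := mul_one _
    have hsum : ∫⁻ x, μ' (Prod.mk x ⁻¹' F) ∂μ ≤ μ A + ENNReal.ofReal (r / 4) := by
      rw [← lintegral_add_compl (fun x => μ' (Prod.mk x ⁻¹' F)) hA]
      exact add_le_add hb1 hb2
    have h2 : ENNReal.ofReal (r / 4) + ENNReal.ofReal (r / 4) ≤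
        μ A + ENNReal.ofReal (r / 4) := by
      rw [← ENNReal.ofReal_add (by linarith) (by linarith)]
      have : r / 4 + r / 4 = r / 2 := by ring
      rw [this]
      exact le_trans hFr (le_trans (le_of_eq hint) hsum)
    exact (ENNReal.add_le_add_iff_right ENNReal.ofReal_ne_top).mp h2
  -- pick x₀ ∈ A
  have hApos : μ A ≠ 0 := by
    intro h
    rw [h] at hAr
    simp only [nonpos_iff_eq_zero, ENNReal.ofReal_eq_zero] at hAr
    linarith
  obtain ⟨x₀, hx₀⟩ := nonempty_of_measure_ne_zero hApos
  -- pick x₀' in the slice F_{x₀}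
  have hslicepos : μ' (Prod.mk x₀ ⁻¹' F) ≠ 0 := by
    intro h
    have := hx₀
    rw [hAdef] at this
    simp only [Set.mem_setOf_eq, h, nonpos_iff_eq_zero, ENNReal.ofReal_eq_zero] at this
    linarith
  obtain ⟨x₀', hx₀'⟩ := nonempty_of_measure_ne_zero hslicepos
  have hx₀'E : (x₀, x₀') ∈ E := hx₀'.1
  have hx₀'B : x₀' ∈ B := hx₀'.2.2
  -- the point a : midpoint
  set a : X := f x₀ + (2 : ℝ)⁻¹ • (f' x₀' - f x₀) with hadef
  have hd : ‖f' x₀' - f x₀‖ ≤ R := by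
    rw [norm_sub_rev]; exact hfE (x₀, x₀') hx₀'E
  have ha1 : ‖f x₀ - a‖ ≤ R / 2 := by
    have : f x₀ - a = -((2 : ℝ)⁻¹ • (f' x₀' - f x₀)) := by rw [hadef]; abel
    rw [this, norm_neg, norm_smul]
    simp only [norm_inv, Real.norm_ofNat]
    linarith
  have ha2 : ‖f' x₀' - a‖ ≤ R / 2 := by
    have : f' x₀' - a = (2 : ℝ)⁻¹ • (f' x₀' - f x₀) := by rw [hadef]; module
    rw [this, norm_smul]
    simp only [norm_inv, Real.norm_ofNat]
    linarith
  refine ⟨a, (fun x => (x, x₀')) ⁻¹' E, Prod.mk x₀ ⁻¹' F,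
    hE.preimage (measurable_id.prodMk measurable_const),
    hF.preimage (measurable_const.prodMk measurable_id), ?_, ?_, ?_, ?_⟩
  · refine le_trans ?_ hx₀'B
    exact ENNReal.ofReal_le_ofReal (by linarith)
  · exact hx₀
  · intro x hx
    have h1 : ‖f x - f' x₀'‖ ≤ R := hfE (x, x₀') hx
    calc ‖f x - a‖ = ‖(f x - f' x₀') + (f' x₀' - a)‖ := by rw [sub_add_sub_cancel]
      _ ≤ ‖f x - f' x₀'‖ + ‖f' x₀' - a‖ := norm_add_le _ _
      _ ≤ R + R / 2 := add_le_add h1 ha2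
      _ = (3 / 2) * R := by ring
  · intro x' hx'
    have h1 : ‖f x₀ - f' x'‖ ≤ R := hfE (x₀, x') hx'.1
    calc ‖f' x' - a‖ = ‖(f' x' - f x₀) + (f x₀ - a)‖ := by rw [sub_add_sub_cancel]
      _ ≤ ‖f' x' - f x₀‖ + ‖f x₀ - a‖ := norm_add_le _ _
      _ ≤ R + R / 2 := add_le_add (by rw [norm_sub_rev]; exact h1) ha1
      _ = (3 / 2) * R := by ring
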